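/- The J-ternary algebra O(1;n) with triple product L is simple: if I is a Φ-subspace of O(1;n) such that L_{f,g}(h) ∈ I, L_{f,h}(g) ∈ I, and L_{h,f}(g) ∈ I for all f, g ∈ O and all h ∈ I (i.e., I is an ideal of the ternary algebra), then I = 0 or I = O(1;n). -/

import Mathlib

/-- The product of the divided power algebra `O(1;n)`, written in coordinates with
respect to the basis `e_0, …, e_{3^n - 1}`: it is the bilinear product determined by
`e_i · e_j = binom(i+j, i) e_{i+j}`, where `e_k = 0` for `k ≥ 3^n`. -/
def omul (Φ : Type*) [Field Φ] (n : ℕ) (f g : Fin (3 ^ n) → Φ) : Fin (3 ^ n) → Φ :=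
  fun k => ∑ i : Fin (3 ^ n), ∑ j : Fin (3 ^ n),
    if (i : ℕ) + (j : ℕ) = (k : ℕ)
    then (((i : ℕ) + (j : ℕ)).choose (i : ℕ) : Φ) * f i * g j
    else 0

/-- The basis element `e_i` of `O(1;n)`. -/
def eb (Φ : Type*) [Field Φ] (n : ℕ) (i : Fin (3 ^ n)) : Fin (3 ^ n) → Φ :=
  Pi.single i 1

/-- The linear map `∂` on `O(1;n)`, with `∂ e_0 = 0` and `∂ e_i = e_{i-1}`;
in coordinates, `(∂ f)_k = f_{k+1}` (interpreted as `0` when `k + 1 ≥ 3^n`). -/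
def odel (Φ : Type*) [Field Φ] (n : ℕ) (f : Fin (3 ^ n) → Φ) : Fin (3 ^ n) → Φ :=
  fun k => if h : (k : ℕ) + 1 < 3 ^ n then f ⟨(k : ℕ) + 1, h⟩ else 0

/-- The triple product `L_{f,g}h = f·g·∂(h) − h·g·∂(f)` on `O(1;n)`. -/
def Lt (Φ : Type*) [Field Φ] (n : ℕ) (f g h : Fin (3 ^ n) → Φ) : Fin (3 ^ n) → Φ :=
  omul Φ n (omul Φ n f g) (odel Φ n h) - omul Φ n (omul Φ n h g) (odel Φ n f)

section Aux
variable (Φ : Type*) [Field Φ] (n : ℕ)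

lemma Npos : 0 < 3 ^ n := pow_pos (by norm_num) n

lemma omul_zero_right (f : Fin (3 ^ n) → Φ) : omul Φ n f 0 = 0 := by
  funext k; unfold omul; simp

lemma omul_e0_left (f : Fin (3 ^ n) → Φ) :
    omul Φ n (eb Φ n ⟨0, Npos n⟩) f = f := by
  funext k
  unfold omul eb
  rw [Finset.sum_eq_single (⟨0, Npos n⟩ : Fin (3 ^ n))]
  · rw [Finset.sum_eq_single k]
    · simp
    · intro j _ hj
      rw [if_neg]
      intro h
      exact hj (Fin.ext (by simpa using h))
    · simp
  · intro i _ hi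
    apply Finset.sum_eq_zero
    intro j _
    rw [Pi.single_eq_of_ne hi]; simp
  · simp

lemma omul_e0_right (f : Fin (3 ^ n) → Φ) :
    omul Φ n f (eb Φ n ⟨0, Npos n⟩) = f := by
  funext k
  unfold omul eb
  rw [Finset.sum_comm]
  rw [Finset.sum_eq_single (⟨0, Npos n⟩ : Fin (3 ^ n))]
  · rw [Finset.sum_eq_single k]
    · simp
    · intro j _ hj
      rw [if_neg]
      intro h
      exact hj (Fin.ext (by simpa using h))
    · simp
  · intro j _ hj
    apply Finset.sum_eq_zero
    intro i _
    rw [Pi.single_eq_of_ne hj]; simp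
  · simp

lemma odel_e0 : odel Φ n (eb Φ n ⟨0, Npos n⟩) = 0 := by
  funext k
  unfold odel eb
  split
  · rw [Pi.single_eq_of_ne]
    · rfl
    · exact fun hc => by have := congrArg Fin.val hc; simp at this
  · rfl

end Aux
section Aux2
variable (Φ : Type*) [Field Φ] (n : ℕ)

lemma odel_e1 (h1 : 1 < 3 ^ n) :
    odel Φ n (eb Φ n ⟨1, h1⟩) = eb Φ n ⟨0, Npos n⟩ := by
  funext k
  unfold odel eb
  by_cases hk : (k : ℕ) = 0
  · have hk' : k = ⟨0, Npos n⟩ := Fin.ext hk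
    subst hk'
    rw [dif_pos (by simpa using h1)]
    simp
  · have h0 : Pi.single (M := fun _ => Φ) (⟨0, Npos n⟩ : Fin (3 ^ n)) (1 : Φ) k = 0 := by
      apply Pi.single_eq_of_ne
      simp [Fin.ext_iff, hk]
    rw [h0]
    split
    · exact Pi.single_eq_of_ne (fun hc => by have := Fin.mk.inj hc; omega) 1
    · rfl

lemma Lt_e0_e0 (h : Fin (3 ^ n) → Φ) :
    Lt Φ n (eb Φ n ⟨0, Npos n⟩) (eb Φ n ⟨0, Npos n⟩) h = odel Φ n h := by
  unfold Lt
  rw [omul_e0_left, omul_e0_left, odel_e0, omul_zero_right, sub_zero]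

lemma Lt_kill (h1 : 1 < 3 ^ n) (g : Fin (3 ^ n) → Φ) :
    Lt Φ n (eb Φ n ⟨1, h1⟩) g (eb Φ n ⟨0, Npos n⟩) = -g := by
  unfold Lt
  rw [odel_e0, omul_zero_right, omul_e0_left, odel_e1, omul_e0_right, zero_sub]

lemma odel_iter (m : ℕ) (f : Fin (3 ^ n) → Φ) (k : Fin (3 ^ n)) :
    (odel Φ n)^[m] f k = if h : (k : ℕ) + m < 3 ^ n then f ⟨(k : ℕ) + m, h⟩ else 0 := by
  induction m generalizing f with
  | zero => simp
  | succ m ih =>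
    rw [Function.iterate_succ_apply, ih]
    simp only [odel]
    by_cases hA : (k : ℕ) + m < 3 ^ n
    · rw [dif_pos hA]
      by_cases hB : (k : ℕ) + m + 1 < 3 ^ n
      · rw [dif_pos hB, dif_pos (show (k : ℕ) + (m + 1) < 3 ^ n by omega)]
        exact congrArg f (Fin.ext (by simp [Nat.add_assoc]))
      · rw [dif_neg hB, dif_neg (show ¬ (k : ℕ) + (m + 1) < 3 ^ n by omega)]
    · rw [dif_neg hA, dif_neg (show ¬ (k : ℕ) + (m + 1) < 3 ^ n by omega)]

end Aux2


/-- The J-ternary algebra `O(1;n)` with triple product `L_{f,g}h = f·g·∂(h) − h·g·∂(f)`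
is simple: any subspace `I` that is an ideal of the ternary algebra (closed under the
triple product whenever at least one argument lies in `I`) is `0` or all of `O(1;n)`. -/
theorem Jternary_simple (Φ : Type*) [Field Φ] [CharP Φ 3] (n : ℕ) (hn : 1 ≤ n) :
    ∀ I : Submodule Φ (Fin (3 ^ n) → Φ),
      (∀ f g : Fin (3 ^ n) → Φ, ∀ h ∈ I,
        Lt Φ n f g h ∈ I ∧ Lt Φ n f h g ∈ I ∧ Lt Φ n h f g ∈ I) →
      I = ⊥ ∨ I = ⊤ := by
  intro I hI
  classical
  by_cases hbot : I = ⊥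
  · exact Or.inl hbot
  right
  rw [Submodule.eq_bot_iff] at hbot
  push_neg at hbot
  obtain ⟨h, hhI, hh0⟩ := hbot
  -- I is closed under ∂
  have hdel : ∀ x ∈ I, odel Φ n x ∈ I := by
    intro x hx
    rw [← Lt_e0_e0 Φ n x]
    exact (hI _ _ x hx).1
  have hiter : ∀ m : ℕ, (odel Φ n)^[m] h ∈ I := by
    intro m
    induction m with
    | zero => simpa using hhI
    | succ m ih => rw [Function.iterate_succ_apply']; exact hdel _ ih
  -- maximal element of the support of h
  obtain ⟨m, hm, hmax⟩ : ∃ m : Fin (3 ^ n), h m ≠ 0 ∧ ∀ i : Fin (3 ^ n), h i ≠ 0 → i ≤ m := by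
    have hNe : (Finset.univ.filter (fun i : Fin (3 ^ n) => h i ≠ 0)).Nonempty := by
      obtain ⟨i, hi⟩ := Function.ne_iff.mp hh0
      exact ⟨i, by simp; simpa using hi⟩
    refine ⟨(Finset.univ.filter (fun i : Fin (3 ^ n) => h i ≠ 0)).max' hNe, ?_, ?_⟩
    · have := Finset.max'_mem _ hNe
      rw [Finset.mem_filter] at this
      exact this.2
    · intro i hi
      exact Finset.le_max' _ i (by simp [hi])
  -- ∂^m h = h m • e₀
  have key : (odel Φ n)^[(m : ℕ)] h = h m • eb Φ n ⟨0, Npos n⟩ := by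
    funext k
    rw [odel_iter]
    by_cases hk : (k : ℕ) = 0
    · have hk' : k = ⟨0, Npos n⟩ := Fin.ext hk
      subst hk'
      rw [dif_pos (by simpa using m.isLt)]
      have : (⟨(⟨0, Npos n⟩ : Fin (3 ^ n)).val + (m : ℕ), by simpa using m.isLt⟩ :
          Fin (3 ^ n)) = m := Fin.ext (by simp)
      rw [this]
      simp [eb]
    · have hrhs : (h m • eb Φ n ⟨0, Npos n⟩) k = 0 := by
        have : eb Φ n ⟨0, Npos n⟩ k = 0 :=
          Pi.single_eq_of_ne (fun hc => hk (by have := congrArg Fin.val hc; simpa using this)) 1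
        rw [Pi.smul_apply, this, smul_zero]
      rw [hrhs]
      split
      · rename_i hlt
        by_contra hc
        have := hmax ⟨(k : ℕ) + (m : ℕ), hlt⟩ hc
        rw [Fin.le_def] at this
        simp only [Fin.val_mk] at this
        omega
      · rfl
  -- e₀ ∈ I
  have he0 : eb Φ n ⟨0, Npos n⟩ ∈ I := by
    have h1 := hiter (m : ℕ)
    rw [key] at h1
    have h2 := I.smul_mem (h m)⁻¹ h1
    rwa [smul_smul, inv_mul_cancel₀ hm, one_smul] at h2
  -- every g is in I
  have h1lt : 1 < 3 ^ n := by
    have : (3 : ℕ) ^ 1 ≤ 3 ^ n := Nat.pow_le_pow_right (by norm_num) hn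
    omega
  rw [Submodule.eq_top_iff']
  intro g
  have hg := (hI (eb Φ n ⟨1, h1lt⟩) g _ he0).1
  rw [Lt_kill] at hg
  simpa using I.neg_mem hg
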